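/- Let α₂, β₂ ∈ ℂ with β₂ ≠ 0, and define f(x,y) = (α₂y, β₂y/(−α₂β₂ + x + y)) and V(x,y) = (β₂ − y)(α₂β₂ − x)/y. Then for every (x,y) ∈ ℂ² with y ≠ 0 and −α₂β₂ + x + y ≠ 0, one has V(f(x,y)) = −α₂·V(x,y). Consequently, if n ≥ 1 is a natural number with (−α₂)ⁿ = 1, then W = Vⁿ satisfies W(f(x,y)) = W(x,y) on the same set, i.e. W is a first integral of f. -/

import Mathlib

/-- For `f(x,y) = (α₂y, β₂y/(−α₂β₂+x+y))` with `β₂ ≠ 0`, the function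
`V(x,y) = (β₂−y)(α₂β₂−x)/y` satisfies `V∘f = −α₂·V`; consequently if
`(−α₂)ⁿ = 1` with `n ≥ 1` then `W = Vⁿ` is a first integral of `f`. -/
theorem stmt10 (α₂ β₂ : ℂ) (hβ : β₂ ≠ 0)
    (f : ℂ × ℂ → ℂ × ℂ)
    (hf : ∀ x y : ℂ, f (x, y) = (α₂ * y, β₂ * y / (-(α₂ * β₂) + x + y)))
    (V : ℂ × ℂ → ℂ)
    (hV : ∀ x y : ℂ, V (x, y) = (β₂ - y) * (α₂ * β₂ - x) / y) :
    (∀ x y : ℂ, y ≠ 0 → -(α₂ * β₂) + x + y ≠ 0 →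
        V (f (x, y)) = -α₂ * V (x, y)) ∧
    ∀ n : ℕ, 1 ≤ n → (-α₂) ^ n = 1 →
      ∀ x y : ℂ, y ≠ 0 → -(α₂ * β₂) + x + y ≠ 0 →
        (V (f (x, y))) ^ n = (V (x, y)) ^ n := by
  have key : ∀ x y : ℂ, y ≠ 0 → -(α₂ * β₂) + x + y ≠ 0 →
      V (f (x, y)) = -α₂ * V (x, y) := by
    intro x y hy hD
    rw [hf, hV, hV]
    field_simp
    field_simp
    ring
  refine ⟨key, fun n hn h1 x y hy hD => ?_⟩
  rw [key x y hy hD, mul_pow, h1, one_mul]
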